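/- Let the unit disc D = {x ∈ ℝ² : ‖x‖ ≤ 1} carry the uniform distribution. For 0 < a ≤ 1, let the chord at height b = √(1−a²) (the horizontal line x₂ = b joining (−a,b) to (a,b)) divide D into an upper cap and the remaining lower region, and let u₂ = 2a³ / (3(arcsin a − a√(1−a²))) and v₂ = −2a³ / (3(a√(1−a²) + arcsin a + 2 arccos a)) be the x₂-coordinates of the centroids of these two regions. Then the equation (u₂ + v₂)/2 = √(1−a²) holds only for a = 1; that is, the only horizontal chord that is the perpendicular bisector of the segment joining the centroids of the two pieces is the diameter. -/
import Mathlib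
open Real

lemma key_ineq (a b P L pp : ℝ) (ha : 0 < a) (hb : 0 ≤ b) (hLP : L ≤ P)
    (hsum : P + L ≤ pp) (hfL : 0 < 3*b*L*(pp - L) - a^3*(pp - 2*L)) :
    a^3*(pp - 2*P) < b*(3*(P*(pp-P))) := by
  have hslope : 0 ≤ 3*pp*b + 2*a^3 - 3*b*(P+L) := by
    nlinarith [mul_nonneg hb (by linarith : (0:ℝ) ≤ pp - (P+L)), pow_pos ha 3]
  have h5 : 0 ≤ (P - L) * (3*pp*b + 2*a^3 - 3*b*(P+L)) := mul_nonneg (by linarith) hslope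
  nlinarith [h5, hfL]

lemma caseA_pos (a b pp : ℝ) (ha : 0 < a) (ha1 : a ≤ 1) (hb : 9/20 ≤ b) (hb1 : b < 1)
    (hab : a^2 + b^2 = 1) (hp : 3.14 < pp) (hp' : pp < 3.15) :
    0 < 3*b*(2*a^3/3)*(pp - 2*a^3/3) - a^3*(pp - 2*(2*a^3/3)) := by
  have ha3 : 0 < a^3 := pow_pos ha 3
  have hG : 0 < pp*(2*b-1) + 4/3*(a^3*(1-b)) := by
    rcases le_or_gt (1/2 : ℝ) b with hbh | hbh
    · nlinarith [mul_nonneg (show (0:ℝ) ≤ pp by linarith) (show (0:ℝ) ≤ 2*b-1 by linarith),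
        mul_pos ha3 (show (0:ℝ) < 1 - b by linarith)]
    · have ha86 : (86/100 : ℝ) ≤ a := by nlinarith
      have ha3' : (64/100 : ℝ) ≤ a^3 := by nlinarith
      nlinarith [mul_nonneg (show (0:ℝ) ≤ 63/20 - pp by linarith)
          (show (0:ℝ) ≤ 1 - 2*b by linarith),
        mul_nonneg (show (0:ℝ) ≤ a^3 - 64/100 by linarith)
          (show (0:ℝ) ≤ 1 - b by linarith)]
  nlinarith [mul_pos ha3 hG]

lemma caseB_pos (a b pp : ℝ) (ha : 0 < a) (ha1 : a ≤ 1) (hb : 0 < b) (hb' : b ≤ 9/20)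
    (hp : 3.141592 < pp) (hp' : pp < 3.141593) :
    0 < 3*b*(pp/2 - 54/25*b)*(pp - (pp/2 - 54/25*b)) - a^3*(pp - 2*(pp/2 - 54/25*b)) := by
  have ha3 : a^3 ≤ 1 := by nlinarith [pow_pos ha 3, mul_pos ha ha]
  have hb2 : b^2 ≤ 81/400 := by nlinarith
  have hpp2 : (98696/10000 : ℝ) ≤ pp^2 := by nlinarith
  nlinarith [mul_pos hb hb, mul_pos (mul_pos hb hb) hb, pow_pos ha 3]

lemma caseB_valid (a b : ℝ) (ha : 0 < a) (hb : 0 < b) (hb' : b ≤ 9/20)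
    (hab : a^2 + b^2 = 1) : b/a + a*b ≤ 54/25 * b := by
  have ha89 : (89/100 : ℝ) ≤ a := by nlinarith
  rw [div_add' _ _ _ (ne_of_gt ha), div_le_iff₀ ha]
  nlinarith [sq_nonneg (a-1)]

lemma aux_mono (x : ℝ) (hx : 0 ≤ x) :
    3 * Real.sin x * Real.cos x + 2 * Real.sin x ^ 3 ≤ 3 * x := by
  have key : Monotone (fun y : ℝ => 3 * y - (3 * (Real.sin y * Real.cos y) + 2 * Real.sin y ^ 3)) := by
    apply monotone_of_deriv_nonneg
    · fun_prop
    · intro y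
      have h1 := Real.hasDerivAt_sin y
      have h2 := Real.hasDerivAt_cos y
      have hg : HasDerivAt (fun y : ℝ => 3 * y - (3 * (Real.sin y * Real.cos y) + 2 * Real.sin y ^ 3))
          (3 * 1 - (3 * (Real.cos y * Real.cos y + Real.sin y * (-Real.sin y)) +
            2 * (3 * Real.sin y ^ 2 * Real.cos y))) y := by
        exact ((hasDerivAt_id y).const_mul 3).sub
          (((h1.mul h2).const_mul 3).add ((h1.pow 3).const_mul 2))
      rw [hg.deriv]
      nlinarith [Real.sin_sq_add_cos_sq y, Real.cos_le_one y, sq_nonneg (Real.sin y),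
        Real.neg_one_le_cos y]
  have h0 := key hx
  simp at h0
  nlinarith [h0]

theorem disc_two_means_chord_is_diameter (a : ℝ) (ha : 0 < a) (ha1 : a ≤ 1) :
    ((2 * a ^ 3 / (3 * (arcsin a - a * Real.sqrt (1 - a ^ 2)))
        + (-(2 * a ^ 3) / (3 * (a * Real.sqrt (1 - a ^ 2) + arcsin a + 2 * arccos a)))) / 2
      = Real.sqrt (1 - a ^ 2)) ↔ a = 1 := by
  constructor
  · intro h
    by_contra hne
    have halt : a < 1 := lt_of_le_of_ne ha1 hne
    have h1a : (0:ℝ) ≤ 1 - a^2 := by nlinarith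
    set b := Real.sqrt (1 - a^2) with hbdef
    have hb2 : b^2 = 1 - a^2 := Real.sq_sqrt h1a
    have hb0 : 0 ≤ b := Real.sqrt_nonneg _
    have hbpos : 0 < b := by
      rcases hb0.lt_or_eq with h' | h'
      · exact h'
      · exfalso; nlinarith [hb2]
    have hblt : b < 1 := by nlinarith [hb2]
    have hab : a^2 + b^2 = 1 := by linarith
    set θ := Real.arcsin a with hθdef
    have hθpos : 0 < θ := Real.arcsin_pos.2 ha
    have hθlt : θ < π/2 := Real.arcsin_lt_pi_div_two.2 halt
    have hsin : Real.sin θ = a := Real.sin_arcsin (by linarith) ha1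
    have hcos : Real.cos θ = b := Real.cos_arcsin a
    have harccos : Real.arccos a = π/2 - θ := Real.arccos_eq_pi_div_two_sub_arcsin a
    rw [harccos] at h
    have hπ : (3.141592:ℝ) < π := Real.pi_gt_d6
    have hπ' : π < 3.141593 := Real.pi_lt_d6
    set P := θ - a * b with hPdef
    have hsinlt : a < θ := by rw [← hsin]; exact Real.sin_lt hθpos
    have haba : a * b ≤ a := mul_le_of_le_one_right ha.le hblt.le
    have hab0 : 0 ≤ a * b := mul_nonneg ha.le hb0
    have hP0 : 0 < P := by rw [hPdef]; linarith
    have hPθ : P ≤ θ := by rw [hPdef]; linarith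
    have hπP : 0 < π - P := by linarith
    have hden2 : a * b + θ + 2 * (π/2 - θ) = π - P := by rw [hPdef]; ring
    rw [hden2] at h
    have hrw : (2 * a ^ 3 / (3 * P) + -(2 * a ^ 3) / (3 * (π - P))) / 2
        = a ^ 3 * (π - 2 * P) / (3 * (P * (π - P))) := by
      field_simp
      ring
    rw [hrw, div_eq_iff (by positivity)] at h
    have hmain : a ^ 3 * (π - 2 * P) < b * (3 * (P * (π - P))) := by
      rcases le_or_gt (9/20 : ℝ) b with hbc | hbc
      · -- case A
        have haux := aux_mono θ hθpos.le
        rw [hsin, hcos] at haux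
        have ha3 : a^3 ≤ 1 := by nlinarith [pow_pos ha 3, mul_pos ha ha]
        exact key_ineq a b P (2*a^3/3) π ha hb0 (by rw [hPdef]; linarith)
          (by linarith) (caseA_pos a b π ha ha1 hbc hblt hab (by linarith) (by linarith))
      · -- case B
        have hφ : Real.arcsin b = π/2 - θ := by
          have h2 := Real.arcsin_sin (x := π/2 - θ) (by linarith) (by linarith)
          rw [Real.sin_pi_div_two_sub, hcos] at h2
          exact h2
        have hsq : Real.sqrt (1 - b^2) = a := by
          have h3 : (1:ℝ) - b^2 = a^2 := by linarith
          rw [h3, Real.sqrt_sq ha.le]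
        have htan : π/2 - θ < b / a := by
          have ht := Real.lt_tan (x := Real.arcsin b)
            (Real.arcsin_pos.2 hbpos) (by rw [hφ]; linarith)
          rw [Real.tan_arcsin, hsq] at ht
          rw [hφ] at ht
          exact ht
        have hval := caseB_valid a b ha hbpos hbc.le hab
        exact key_ineq a b P (π/2 - 54/25*b) π ha hb0
          (by rw [hPdef]; linarith)
          (by nlinarith [mul_nonneg hb0 hb0])
          (caseB_pos a b π ha ha1 hbpos hbc.le hπ hπ')
    linarith [h, hmain]
  · intro h
    subst h
    norm_num [Real.arcsin_one, Real.arccos_one]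
    ring
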